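/- Let m ≥ 1 be an integer, ρ > 0, and 0 < c₁ ≤ c₂ constants. Let H : ℝ → M_m(ℝ) be continuous, let D : ℝ → M_m(ℝ) be such that each D(t) is a real diagonal matrix, and let N : ℝ → M_m(ℂ) be continuously differentiable, satisfying: N(t)H(t) = D(t)N(t) for all t; c₁|v| ≤ |N(t)v| ≤ c₂|v| for all t ∈ ℝ and v ∈ ℂ^m; and t ↦ ‖N′(t)‖ is integrable on ℝ. If v : ℝ → ℂ^m is differentiable and solves v′(t) = i ρ H(t) v(t) for all t ∈ ℝ, then for all t ∈ ℝ: |v(t)|² ≤ (c₂²/c₁²) |v(0)|² · exp( (2/c₁) ∫_ℝ ‖N′(s)‖ ds ). -/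

import Mathlib

open MeasureTheory

/-- The action of an `m × m` complex matrix on `ℂ^m` with the Euclidean norm. -/
noncomputable def matAct {m : ℕ} (A : Matrix (Fin m) (Fin m) ℂ)
    (v : EuclideanSpace ℂ (Fin m)) : EuclideanSpace ℂ (Fin m) :=
  Matrix.toEuclideanLin A v

/-- The operator norm of an `m × m` complex matrix with respect to the Euclidean norm. -/
noncomputable def matOpNorm {m : ℕ} (A : Matrix (Fin m) (Fin m) ℂ) : ℝ :=
  ‖LinearMap.toContinuousLinearMap (Matrix.toEuclideanLin A)‖

noncomputable def matCLM {m : ℕ} (A : Matrix (Fin m) (Fin m) ℂ) :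
    EuclideanSpace ℂ (Fin m) →L[ℂ] EuclideanSpace ℂ (Fin m) :=
  LinearMap.toContinuousLinearMap (Matrix.toEuclideanLin A)

lemma matAct_eq {m : ℕ} (A : Matrix (Fin m) (Fin m) ℂ) (v) : matAct A v = matCLM A v := rfl
lemma matOpNorm_eq {m : ℕ} (A : Matrix (Fin m) (Fin m) ℂ) : matOpNorm A = ‖matCLM A‖ := rfl

noncomputable def matL (m : ℕ) : Matrix (Fin m) (Fin m) ℂ →ₗ[ℂ]
    (EuclideanSpace ℂ (Fin m) →L[ℂ] EuclideanSpace ℂ (Fin m)) where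
  toFun := matCLM
  map_add' A B := by ext v; simp [matCLM, map_add]
  map_smul' c A := by ext v; simp [matCLM, _root_.map_smul]

lemma matAct_le {m : ℕ} (A : Matrix (Fin m) (Fin m) ℂ) (v) :
    ‖matAct A v‖ ≤ matOpNorm A * ‖v‖ := (matCLM A).le_opNorm v

lemma matAct_mul {m : ℕ} (A B : Matrix (Fin m) (Fin m) ℂ) (v) :
    matAct (A * B) v = matAct A (matAct B v) := by
  simp [matAct, Matrix.toEuclideanLin_apply, Matrix.mulVec_mulVec]

lemma hasDerivAt_linmap {m : ℕ} {F : Type*} [NormedAddCommGroup F] [NormedSpace ℂ F]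
    (L : Matrix (Fin m) (Fin m) ℂ →ₗ[ℂ] F) (N N' : ℝ → Matrix (Fin m) (Fin m) ℂ) (t : ℝ)
    (hN : ∀ i j, HasDerivAt (fun s => N s i j) (N' t i j) t) :
    HasDerivAt (fun s => L (N s)) (L (N' t)) t := by
  have key : ∀ A : Matrix (Fin m) (Fin m) ℂ,
      L A = ∑ i : Fin m, ∑ j : Fin m, A i j • L (Matrix.single i j 1) := by
    intro A
    conv_lhs => rw [Matrix.matrix_eq_sum_single A]
    rw [map_sum]
    refine Finset.sum_congr rfl fun i _ => ?_
    rw [map_sum]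
    refine Finset.sum_congr rfl fun j _ => ?_
    rw [← _root_.map_smul, Matrix.smul_single, smul_eq_mul, mul_one]
  have h1 : (fun s => L (N s)) = fun s => ∑ i : Fin m, ∑ j : Fin m,
      N s i j • L (Matrix.single i j 1) := funext fun s => key (N s)
  rw [h1, key (N' t)]
  exact HasDerivAt.fun_sum fun i _ => HasDerivAt.fun_sum fun j _ => (hN i j).smul_const _

lemma matAct_apply {m : ℕ} (A : Matrix (Fin m) (Fin m) ℂ) (v : EuclideanSpace ℂ (Fin m))
    (i : Fin m) : matAct A v i = ∑ j, A i j * v j := by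
  simp [matAct, Matrix.toEuclideanLin_apply, Matrix.mulVec, dotProduct]

lemma diag_inner_im {m : ℕ} (D : Matrix (Fin m) (Fin m) ℝ) (hD : D.IsDiag)
    (w : EuclideanSpace ℂ (Fin m)) :
    (inner ℂ w (matAct (D.map Complex.ofReal) w) : ℂ).im = 0 := by
  rw [PiLp.inner_apply]
  rw [Complex.im_sum]
  refine Finset.sum_eq_zero fun i _ => ?_
  have h : matAct (D.map Complex.ofReal) w i = (D i i : ℂ) * w i := by
    rw [matAct_apply]
    rw [Finset.sum_eq_single i]
    · simp
    · intro j _ hj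
      simp [Matrix.map_apply, hD (Ne.symm hj)]
    · simp
  rw [h, RCLike.inner_apply']
  have h2 : (starRingEnd ℂ) (w i) * ((D i i : ℂ) * w i)
      = (D i i : ℂ) * ((starRingEnd ℂ) (w i) * w i) := by ring
  rw [h2, Complex.conj_mul']
  rw [← Complex.ofReal_pow, ← Complex.ofReal_mul]
  exact Complex.ofReal_im _

lemma le_mul_exp_of_mul_exp_le {a b x : ℝ} (h : a * Real.exp x ≤ b) :
    a ≤ b * Real.exp (-x) := by
  rw [Real.exp_neg, ← div_eq_mul_inv, le_div_iff₀ (Real.exp_pos x)]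
  exact h

set_option maxHeartbeats 1000000 in
/-- Energy estimate (Lemma 2.2): if `N` diagonalizes the continuous real
matrix family `H` to the real diagonal family `D`, `N` is uniformly bounded above and
below, `‖N'‖` is integrable, and `v' = i ρ H v`, then
`‖v t‖² ≤ (c₂²/c₁²) ‖v 0‖² exp((2/c₁) ∫ ‖N'‖)`. -/
theorem energy_estimate
    (m : ℕ) (hm : 1 ≤ m) (ρ c₁ c₂ : ℝ) (hρ : 0 < ρ) (hc₁ : 0 < c₁) (hc₁₂ : c₁ ≤ c₂)
    (H : ℝ → Matrix (Fin m) (Fin m) ℝ) (hH : Continuous H)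
    (D : ℝ → Matrix (Fin m) (Fin m) ℝ) (hD : ∀ t, (D t).IsDiag)
    (N N' : ℝ → Matrix (Fin m) (Fin m) ℂ)
    (hN : ∀ (t : ℝ) (i j : Fin m), HasDerivAt (fun s => N s i j) (N' t i j) t)
    (hN' : Continuous N')
    (hNH : ∀ t, N t * (H t).map (Complex.ofReal) = (D t).map (Complex.ofReal) * N t)
    (hNlow : ∀ (t : ℝ) (v : EuclideanSpace ℂ (Fin m)), c₁ * ‖v‖ ≤ ‖matAct (N t) v‖)
    (hNup : ∀ (t : ℝ) (v : EuclideanSpace ℂ (Fin m)), ‖matAct (N t) v‖ ≤ c₂ * ‖v‖)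
    (hint : Integrable (fun t => matOpNorm (N' t)))
    (v : ℝ → EuclideanSpace ℂ (Fin m))
    (hv : ∀ t : ℝ, HasDerivAt v
      ((Complex.I * (ρ : ℂ)) • matAct ((H t).map (Complex.ofReal)) (v t)) t) :
    ∀ t : ℝ, ‖v t‖ ^ 2 ≤ (c₂ ^ 2 / c₁ ^ 2) * ‖v 0‖ ^ 2 *
      Real.exp ((2 / c₁) * ∫ s : ℝ, matOpNorm (N' s)) := by
  classical
  set K : ℝ → ℝ := fun t => matOpNorm (N' t) with hKdef
  have hKcont : Continuous K := by
    have h1 : Continuous (fun t => matL m (N' t)) :=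
      ((matL m).continuous_of_finiteDimensional).comp hN'
    exact h1.norm
  have hKnonneg : ∀ t, 0 ≤ K t := fun t => norm_nonneg _
  set w : ℝ → EuclideanSpace ℂ (Fin m) := fun t => matAct (N t) (v t) with hwdef
  -- derivative of w
  have hw : ∀ t, HasDerivAt w
      (matAct (N' t) (v t) + (Complex.I * (ρ : ℂ)) • matAct ((D t).map Complex.ofReal) (w t)) t := by
    intro t
    set LR : Matrix (Fin m) (Fin m) ℂ →ₗ[ℂ]
        (EuclideanSpace ℂ (Fin m) →L[ℝ] EuclideanSpace ℂ (Fin m)) :=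
      (ContinuousLinearMap.restrictScalarsₗ ℂ (EuclideanSpace ℂ (Fin m))
        (EuclideanSpace ℂ (Fin m)) ℝ ℂ).comp (matL m) with hLR
    have hNc : HasDerivAt (fun s => LR (N s)) (LR (N' t)) t :=
      hasDerivAt_linmap LR N N' t (hN t)
    have h := hNc.clm_apply (hv t)
    have heq : (LR (N' t)) (v t) + (LR (N t))
        ((Complex.I * (ρ : ℂ)) • matAct ((H t).map Complex.ofReal) (v t))
        = matAct (N' t) (v t) + (Complex.I * (ρ : ℂ)) • matAct ((D t).map Complex.ofReal) (w t) := by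
      have : (LR (N t)) ((Complex.I * (ρ : ℂ)) • matAct ((H t).map Complex.ofReal) (v t))
          = (Complex.I * (ρ : ℂ)) • matAct (N t) (matAct ((H t).map Complex.ofReal) (v t)) := by
        show matCLM (N t) (_ • _) = _
        rw [_root_.map_smul]; rfl
      rw [this, ← matAct_mul, hNH t, matAct_mul]
      rfl
    rw [heq] at h
    exact h
  set φ : ℝ → ℝ := fun t => ‖w t‖ ^ 2 with hφdef
  set ψ : ℝ → ℝ := fun t => 2 * (inner ℂ (w t) (matAct (N' t) (v t)) : ℂ).re with hψdef
  have hφ : ∀ t, HasDerivAt φ (ψ t) t := by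
    intro t
    have hinner := HasDerivAt.inner ℂ (hw t) (hw t)
    have hre := Complex.reCLM.hasFDerivAt.comp_hasDerivAt t hinner
    have hfun : (fun s => Complex.reCLM (inner ℂ (w s) (w s) : ℂ)) = φ := by
      funext s
      simp only [Complex.reCLM_apply, hφdef]
      rw [← @inner_self_eq_norm_sq ℂ]
      rfl
    have hval : Complex.reCLM
        ((inner ℂ (w t) (matAct (N' t) (v t) + (Complex.I * (ρ : ℂ)) • matAct ((D t).map Complex.ofReal) (w t)) : ℂ)
          + (inner ℂ (matAct (N' t) (v t) + (Complex.I * (ρ : ℂ)) • matAct ((D t).map Complex.ofReal) (w t)) (w t) : ℂ))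
        = ψ t := by
      simp only [Complex.reCLM_apply, Complex.add_re]
      rw [inner_add_right, inner_add_left, inner_smul_right, inner_smul_left]
      have him := diag_inner_im (D t) (hD t) (w t)
      have h1 : ((Complex.I * (ρ : ℂ)) * (inner ℂ (w t) (matAct ((D t).map Complex.ofReal) (w t)) : ℂ)).re = 0 := by
        rw [Complex.mul_re, him]
        simp
      have him2 : (inner ℂ (matAct ((D t).map Complex.ofReal) (w t)) (w t) : ℂ).im = 0 := by
        rw [← inner_conj_symm (matAct ((D t).map Complex.ofReal) (w t)) (w t),
          Complex.conj_im, him, neg_zero]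
      have h2 : ((starRingEnd ℂ) (Complex.I * (ρ : ℂ)) * (inner ℂ (matAct ((D t).map Complex.ofReal) (w t)) (w t) : ℂ)).re = 0 := by
        rw [Complex.mul_re, him2]
        simp
      have h3 : ((inner ℂ (matAct (N' t) (v t)) (w t) : ℂ)).re = ((inner ℂ (w t) (matAct (N' t) (v t)) : ℂ)).re := by
        rw [← inner_conj_symm (matAct (N' t) (v t)) (w t)]
        exact Complex.conj_re _
      simp only [Complex.add_re, h1, h2, h3, hψdef]
      ring
    rw [← hfun] at *
    rw [← hval]
    exact hre
  -- bound on ψ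
  have hψbound : ∀ t, |ψ t| ≤ (2 / c₁) * K t * φ t := by
    intro t
    have h1 : ‖(inner ℂ (w t) (matAct (N' t) (v t)) : ℂ)‖ ≤ ‖w t‖ * ‖matAct (N' t) (v t)‖ :=
      norm_inner_le_norm _ _
    have h2 : ‖matAct (N' t) (v t)‖ ≤ K t * ‖v t‖ := matAct_le _ _
    have h3 : c₁ * ‖v t‖ ≤ ‖w t‖ := hNlow t (v t)
    have h4 : |(inner ℂ (w t) (matAct (N' t) (v t)) : ℂ).re| ≤ ‖(inner ℂ (w t) (matAct (N' t) (v t)) : ℂ)‖ :=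
      Complex.abs_re_le_norm _
    have hv0 : (0:ℝ) ≤ ‖v t‖ := norm_nonneg _
    have hw0 : (0:ℝ) ≤ ‖w t‖ := norm_nonneg _
    have hK0 := hKnonneg t
    rw [hψdef, abs_mul, abs_two]
    have : |(inner ℂ (w t) (matAct (N' t) (v t)) : ℂ).re| ≤ (K t / c₁) * ‖w t‖ ^ 2 := by
      have h5 : ‖v t‖ ≤ ‖w t‖ / c₁ := by
        rw [le_div_iff₀ hc₁]; linarith [h3]
      calc |(inner ℂ (w t) (matAct (N' t) (v t)) : ℂ).re| ≤ ‖w t‖ * (K t * ‖v t‖) :=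
            h4.trans (h1.trans (by nlinarith))
        _ ≤ ‖w t‖ * (K t * (‖w t‖ / c₁)) := by
            gcongr
        _ = (K t / c₁) * ‖w t‖ ^ 2 := by ring
    calc 2 * |(inner ℂ (w t) (matAct (N' t) (v t)) : ℂ).re| ≤ 2 * ((K t / c₁) * ‖w t‖ ^ 2) := by
          linarith
      _ = (2 / c₁) * K t * φ t := by rw [hφdef]; ring
  -- Gronwall-type argument
  set g : ℝ → ℝ := fun t => ∫ s in (0:ℝ)..t, K s with hgdef
  have hg : ∀ t, HasDerivAt g (K t) t := fun t =>
    (hKcont.integral_hasStrictDerivAt 0 t).hasDerivAt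
  set c : ℝ := 2 / c₁ with hcdef
  have hc0 : 0 ≤ c := by positivity
  have hφ0 : ∀ t, 0 ≤ φ t := fun t => sq_nonneg _
  -- F antitone
  set F : ℝ → ℝ := fun t => φ t * Real.exp (-(c * g t)) with hFdef
  have hF : ∀ t, HasDerivAt F
      (ψ t * Real.exp (-(c * g t)) + φ t * (Real.exp (-(c * g t)) * (-(c * K t)))) t := by
    intro t
    have he : HasDerivAt (fun s => Real.exp (-(c * g s))) (Real.exp (-(c * g t)) * (-(c * K t))) t := by
      have : HasDerivAt (fun s => -(c * g s)) (-(c * K t)) t := ((hg t).const_mul c).neg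
      exact this.exp
    exact (hφ t).mul he
  have hFanti : Antitone F := by
    refine antitone_of_deriv_nonpos (fun t => (hF t).differentiableAt) (fun t => ?_)
    rw [(hF t).deriv]
    have hexp : (0:ℝ) < Real.exp (-(c * g t)) := Real.exp_pos _
    have hb := hψbound t
    have := abs_le.mp hb
    nlinarith [this.2, hexp.le, hφ0 t]
  -- G monotone
  set G : ℝ → ℝ := fun t => φ t * Real.exp (c * g t) with hGdef
  have hG : ∀ t, HasDerivAt G
      (ψ t * Real.exp (c * g t) + φ t * (Real.exp (c * g t) * (c * K t))) t := by
    intro t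
    have he : HasDerivAt (fun s => Real.exp (c * g s)) (Real.exp (c * g t) * (c * K t)) t :=
      ((hg t).const_mul c).exp
    exact (hφ t).mul he
  have hGmono : Monotone G := by
    refine monotone_of_deriv_nonneg (fun t => (hG t).differentiableAt) (fun t => ?_)
    rw [(hG t).deriv]
    have hexp : (0:ℝ) < Real.exp (c * g t) := Real.exp_pos _
    have hb := hψbound t
    have := abs_le.mp hb
    nlinarith [this.1, hexp.le, hφ0 t]
  have hg0 : g 0 = 0 := intervalIntegral.integral_same
  set Itot : ℝ := ∫ s : ℝ, K s with hItot
  have hItot0 : 0 ≤ Itot := integral_nonneg hKnonneg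
  -- key estimate: φ t ≤ φ 0 * exp (c * Itot)
  have hkey : ∀ t, φ t ≤ φ 0 * Real.exp (c * Itot) := by
    intro t
    rcases le_or_gt 0 t with ht | ht
    · have h1 : F t ≤ F 0 := hFanti ht
      rw [hFdef] at h1
      simp only [hg0, mul_zero, neg_zero, Real.exp_zero, mul_one] at h1
      -- φ t ≤ φ 0 * exp (c * g t)
      have h2 : φ t ≤ φ 0 * Real.exp (c * g t) := by
        have := le_mul_exp_of_mul_exp_le (x := -(c * g t)) (by simpa using h1)
        simpa using this
      have h3 : g t ≤ Itot := by
        rw [hgdef]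
        simp only
        rw [intervalIntegral.integral_of_le ht]
        exact setIntegral_le_integral hint (Filter.Eventually.of_forall hKnonneg)
      calc φ t ≤ φ 0 * Real.exp (c * g t) := h2
        _ ≤ φ 0 * Real.exp (c * Itot) :=
            mul_le_mul_of_nonneg_left
              (Real.exp_le_exp.mpr (mul_le_mul_of_nonneg_left h3 hc0)) (hφ0 0)
    · have h1 : G t ≤ G 0 := hGmono ht.le
      rw [hGdef] at h1
      simp only [hg0, mul_zero, Real.exp_zero, mul_one] at h1
      have h2 : φ t ≤ φ 0 * Real.exp (-(c * g t)) :=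
        le_mul_exp_of_mul_exp_le h1
      have h3 : -(g t) ≤ Itot := by
        rw [hgdef]
        simp only
        rw [← intervalIntegral.integral_symm, intervalIntegral.integral_of_le ht.le]
        exact setIntegral_le_integral hint (Filter.Eventually.of_forall hKnonneg)
      calc φ t ≤ φ 0 * Real.exp (-(c * g t)) := h2
        _ = φ 0 * Real.exp (c * (-(g t))) := by ring_nf
        _ ≤ φ 0 * Real.exp (c * Itot) :=
            mul_le_mul_of_nonneg_left
              (Real.exp_le_exp.mpr (mul_le_mul_of_nonneg_left h3 hc0)) (hφ0 0)
  -- finish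
  intro t
  have h1 : c₁ ^ 2 * ‖v t‖ ^ 2 ≤ φ t := by
    have hl : c₁ * ‖v t‖ ≤ ‖w t‖ := hNlow t (v t)
    have h0 : 0 ≤ c₁ * ‖v t‖ := by positivity
    have hre : φ t = ‖w t‖ ^ 2 := rfl
    rw [hre]
    nlinarith [norm_nonneg (w t)]
  have h2 : φ 0 ≤ c₂ ^ 2 * ‖v 0‖ ^ 2 := by
    have hu : ‖w 0‖ ≤ c₂ * ‖v 0‖ := hNup 0 (v 0)
    have hre : φ 0 = ‖w 0‖ ^ 2 := rfl
    rw [hre]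
    nlinarith [norm_nonneg (w 0), norm_nonneg (v 0), hc₁.trans_le hc₁₂]
  have h3 := hkey t
  have hexp : (0:ℝ) < Real.exp (c * Itot) := Real.exp_pos _
  have hgoal : ‖v t‖ ^ 2 ≤ (c₂ ^ 2 / c₁ ^ 2) * ‖v 0‖ ^ 2 * Real.exp (c * Itot) := by
    rw [div_mul_eq_mul_div, div_mul_eq_mul_div, le_div_iff₀ (by positivity : (0:ℝ) < c₁ ^ 2)]
    calc ‖v t‖ ^ 2 * c₁ ^ 2 = c₁ ^ 2 * ‖v t‖ ^ 2 := by ring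
      _ ≤ φ t := h1
      _ ≤ φ 0 * Real.exp (c * Itot) := h3
      _ ≤ c₂ ^ 2 * ‖v 0‖ ^ 2 * Real.exp (c * Itot) := by gcongr
  exact hgoal
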